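/- Let θ ∈ (0,1). There exists N₀ ∈ ℕ such that for every N ≥ N₀ the following holds: letting r be the greatest integer with r < (N−1)θ (so r is the unique integer in the interval [(N−1)θ − 1, (N−1)θ)), the binomial probability satisfies C(N−1, r) · θ^r · (1−θ)^{N−1−r} ≥ 1/(2√N). Equivalently, for Y distributed as Binomial(N−1, θ) and b = (1 − 1/N)θ, P(b − 1/N ≤ Y/N < b) ≥ 1/(2√N). -/

import Mathlib

open Real

lemma stirling_lb (n : ℕ) (hn : 1 ≤ n) :
    Real.sqrt π * (Real.sqrt (2 * n) * ((n : ℝ) / Real.exp 1) ^ n) ≤ (n.factorial : ℝ) := by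
  obtain ⟨k, rfl⟩ := Nat.exists_eq_add_of_le hn
  have h1 : Real.sqrt π ≤ Stirling.stirlingSeq (1 + k) := by
    have ht : Filter.Tendsto (Stirling.stirlingSeq ∘ Nat.succ) Filter.atTop (nhds (Real.sqrt π)) :=
      Stirling.tendsto_stirlingSeq_sqrt_pi.comp (Filter.tendsto_add_atTop_nat 1)
    have := Stirling.stirlingSeq'_antitone.le_of_tendsto ht k
    simpa [Nat.succ_eq_add_one, Nat.add_comm] using this
  have hD : 0 < Real.sqrt (2 * (1 + k : ℕ)) * (((1 + k : ℕ) : ℝ) / Real.exp 1) ^ (1 + k) := by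
    positivity
  have := mul_le_mul_of_nonneg_right h1 hD.le
  rwa [Stirling.stirlingSeq, div_mul_cancel₀ _ hD.ne'] at this

lemma stirling_ub (n : ℕ) (hn : 1 ≤ n) :
    (n.factorial : ℝ) ≤ (Real.exp 1 / Real.sqrt 2) * (Real.sqrt (2 * n) * ((n : ℝ) / Real.exp 1) ^ n) := by
  obtain ⟨k, rfl⟩ := Nat.exists_eq_add_of_le hn
  have h1 : Stirling.stirlingSeq (1 + k) ≤ Real.exp 1 / Real.sqrt 2 := by
    have := Stirling.stirlingSeq'_antitone (Nat.zero_le k)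
    simpa [Stirling.stirlingSeq_one, Nat.succ_eq_add_one, Nat.add_comm] using this
  have hD : 0 < Real.sqrt (2 * (1 + k : ℕ)) * (((1 + k : ℕ) : ℝ) / Real.exp 1) ^ (1 + k) := by
    positivity
  have := mul_le_mul_of_nonneg_right h1 hD.le
  rwa [Stirling.stirlingSeq, div_mul_cancel₀ _ hD.ne'] at this

set_option maxHeartbeats 2000000 in
/-- Lemma: central binomial probabilities are not too small.
Let `θ ∈ (0,1)`. For all sufficiently large `N`, letting `r` be the greatest integer with
`r < (N−1)θ`, we have `C(N−1, r) θ^r (1−θ)^{N−1−r} ≥ 1/(2√N)`. -/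
theorem stmt18 (θ : ℝ) (hθ0 : 0 < θ) (hθ1 : θ < 1) :
    ∃ N₀ : ℕ, ∀ N : ℕ, N₀ ≤ N → ∀ r : ℕ,
      ((r : ℝ) < ((N : ℝ) - 1) * θ) →
      (∀ r' : ℕ, ((r' : ℝ) < ((N : ℝ) - 1) * θ) → r' ≤ r) →
      1 / (2 * Real.sqrt N) ≤
        (Nat.choose (N - 1) r : ℝ) * θ ^ r * (1 - θ) ^ (N - 1 - r) := by
  have hθ01 : 0 < 1 - θ := by linarith
  have hθθ : 0 < θ * (1 - θ) := by positivity
  refine ⟨⌈(6 : ℝ) / (θ * (1 - θ))⌉₊ + 3, fun N hN r hr hmax => ?_⟩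
  set m := N - 1 with hm
  have hN1 : 1 ≤ N := by omega
  have hmN : (m : ℝ) = (N : ℝ) - 1 := by
    rw [hm, Nat.cast_sub hN1, Nat.cast_one]
  rw [← hmN] at hr hmax
  -- basic size facts
  have hm6 : 6 ≤ (m : ℝ) * (θ * (1 - θ)) := by
    have h1 : (6 : ℝ) / (θ * (1 - θ)) ≤ (⌈(6 : ℝ) / (θ * (1 - θ))⌉₊ : ℝ) := Nat.le_ceil _
    have h2 : (⌈(6 : ℝ) / (θ * (1 - θ))⌉₊ : ℝ) ≤ (m : ℝ) := by
      have : ⌈(6 : ℝ) / (θ * (1 - θ))⌉₊ ≤ m := by omega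
      exact_mod_cast this
    rw [div_le_iff₀ hθθ] at h1
    nlinarith
  have hmθ : 6 ≤ (m : ℝ) * θ := by nlinarith
  have hmθ' : 6 ≤ (m : ℝ) * (1 - θ) := by nlinarith
  have hmpos : (0 : ℝ) < m := by nlinarith
  -- r bounds
  have hrlow : (m : ℝ) * θ - 1 ≤ (r : ℝ) := by
    by_contra h
    push_neg at h
    have h1 : ((r + 1 : ℕ) : ℝ) < (m : ℝ) * θ := by push_cast; linarith
    have := hmax (r + 1) h1
    omega
  have hr1 : 1 ≤ r := by
    have : (1 : ℝ) ≤ (r : ℝ) := by linarith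
    exact_mod_cast this
  have hrm : r < m := by
    have : (r : ℝ) < (m : ℝ) := by nlinarith
    exact_mod_cast this
  have hbcast : ((m - r : ℕ) : ℝ) = (m : ℝ) - (r : ℝ) := by
    rw [Nat.cast_sub hrm.le]
  set e := Real.exp 1 with he
  have hepos : 0 < e := Real.exp_pos 1
  set a := (r : ℝ) with ha
  set b := (m : ℝ) - a with hb
  have hapos : (0 : ℝ) < a := by rw [ha]; exact_mod_cast hr1
  have hbpos : (0 : ℝ) < b := by rw [hb]; nlinarith
  have hblarge : 6 ≤ b := by rw [hb]; nlinarith [hr]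
  have hab : a + b = (m : ℝ) := by rw [hb]; ring
  -- key pieces
  have hpowsplit : ((m : ℝ) / e) ^ m = ((m : ℝ) / e) ^ r * ((m : ℝ) / e) ^ (m - r) := by
    rw [← pow_add, Nat.add_sub_cancel' hrm.le]
  -- factorial bounds
  have hmfact := stirling_lb m (by omega)
  have hrfact := stirling_ub r hr1
  have hbfact := stirling_ub (m - r) (by omega)
  -- the choose identity
  have hchoose : (Nat.choose m r : ℝ) =
      (m.factorial : ℝ) / ((r.factorial : ℝ) * ((m - r).factorial : ℝ)) := by
    rw [eq_div_iff (by positivity)]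
    have := Nat.choose_mul_factorial_mul_factorial hrm.le
    have h2 : ((m.choose r * r.factorial * (m - r).factorial : ℕ) : ℝ) = (m.factorial : ℝ) := by
      exact_mod_cast congrArg (Nat.cast : ℕ → ℝ) this
    push_cast at h2
    linarith [h2]
  -- rewrite casts
  rw [hbcast] at hbfact
  have hbfact' : ((m - r).factorial : ℝ) ≤
      e / Real.sqrt 2 * (Real.sqrt (2 * b) * (b / e) ^ (m - r)) := hbfact
  -- exp lemma : exp (1 - t) ≤ 1 / t for t > 0
  have exp_one_sub_le : ∀ t : ℝ, 0 < t → Real.exp (1 - t) ≤ 1 / t := by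
    intro t ht
    have h := Real.add_one_le_exp (t - 1)
    rw [sub_add_cancel] at h
    have h2 : Real.exp (1 - t) = (Real.exp (t - 1))⁻¹ := by
      rw [← Real.exp_neg]; ring_nf
    rw [h2, one_div]
    exact inv_anti₀ ht h
  -- bound A
  have hAa : Real.exp (a * (1 - a / ((m : ℝ) * θ))) ≤ ((m : ℝ) * θ / a) ^ r := by
    have ht : 0 < a / ((m : ℝ) * θ) := by positivity
    have h1 := exp_one_sub_le _ ht
    rw [one_div_div] at h1
    calc Real.exp (a * (1 - a / ((m : ℝ) * θ)))
        = Real.exp (1 - a / ((m : ℝ) * θ)) ^ r := by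
          rw [← Real.exp_nat_mul]
      _ ≤ ((m : ℝ) * θ / a) ^ r :=
          pow_le_pow_left₀ (Real.exp_nonneg _) h1 r
  have hAb : Real.exp (b * (1 - b / ((m : ℝ) * (1 - θ)))) ≤
      ((m : ℝ) * (1 - θ) / b) ^ (m - r) := by
    have ht : 0 < b / ((m : ℝ) * (1 - θ)) := by positivity
    have h1 := exp_one_sub_le _ ht
    rw [one_div_div] at h1
    calc Real.exp (b * (1 - b / ((m : ℝ) * (1 - θ))))
        = Real.exp (1 - b / ((m : ℝ) * (1 - θ))) ^ (m - r) := by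
          rw [← Real.exp_nat_mul, hbcast]
      _ ≤ ((m : ℝ) * (1 - θ) / b) ^ (m - r) :=
          pow_le_pow_left₀ (Real.exp_nonneg _) h1 _
  have hδ : (a - (m : ℝ) * θ) ^ 2 ≤ 1 := by
    nlinarith [hr, hrlow]
  have hEid : a * (1 - a / ((m : ℝ) * θ)) + b * (1 - b / ((m : ℝ) * (1 - θ))) =
      -((a - (m : ℝ) * θ) ^ 2 / ((m : ℝ) * (θ * (1 - θ)))) := by
    rw [hb]
    field_simp
    ring
  have hE : -(1 / 6 : ℝ) ≤
      a * (1 - a / ((m : ℝ) * θ)) + b * (1 - b / ((m : ℝ) * (1 - θ))) := by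
    rw [hEid, neg_le_neg_iff, div_le_iff₀ (by nlinarith : (0:ℝ) < (m : ℝ) * (θ * (1 - θ)))]
    nlinarith
  have hA56 : (5 / 6 : ℝ) ≤
      ((m : ℝ) * θ / a) ^ r * ((m : ℝ) * (1 - θ) / b) ^ (m - r) := by
    have h1 : Real.exp (a * (1 - a / ((m : ℝ) * θ))) *
        Real.exp (b * (1 - b / ((m : ℝ) * (1 - θ)))) ≤
        ((m : ℝ) * θ / a) ^ r * ((m : ℝ) * (1 - θ) / b) ^ (m - r) :=
      mul_le_mul hAa hAb (Real.exp_nonneg _) (by positivity)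
    rw [← Real.exp_add] at h1
    have h2 : Real.exp (-(1/6 : ℝ)) ≤
        Real.exp (a * (1 - a / ((m : ℝ) * θ)) + b * (1 - b / ((m : ℝ) * (1 - θ)))) :=
      Real.exp_le_exp.mpr hE
    have h3 : (5/6 : ℝ) ≤ Real.exp (-(1/6 : ℝ)) := by
      have := Real.add_one_le_exp (-(1/6 : ℝ))
      linarith
    linarith
  -- bound S
  have hSden : Real.sqrt (2 * a) * Real.sqrt (2 * b) ≤ (m : ℝ) := by
    rw [← Real.sqrt_mul (by positivity)]
    have h1 : (2 * a) * (2 * b) ≤ ((m : ℝ)) ^ 2 := by nlinarith [sq_nonneg (a - b)]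
    calc Real.sqrt ((2 * a) * (2 * b)) ≤ Real.sqrt ((m : ℝ) ^ 2) := Real.sqrt_le_sqrt h1
      _ = (m : ℝ) := Real.sqrt_sq hmpos.le
  have hS : Real.sqrt 2 / Real.sqrt m ≤
      Real.sqrt (2 * m) / (Real.sqrt (2 * a) * Real.sqrt (2 * b)) := by
    have h2 : Real.sqrt (2 * (m : ℝ)) = Real.sqrt 2 * Real.sqrt (m : ℝ) :=
      Real.sqrt_mul (by norm_num) _
    have hden : 0 < Real.sqrt (2 * a) * Real.sqrt (2 * b) := by positivity
    have h3 : Real.sqrt (2 * (m : ℝ)) / (m : ℝ) ≤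
        Real.sqrt (2 * m) / (Real.sqrt (2 * a) * Real.sqrt (2 * b)) :=
      div_le_div_of_nonneg_left (Real.sqrt_nonneg _) hden hSden
    have h4 : Real.sqrt 2 / Real.sqrt m = Real.sqrt (2 * (m : ℝ)) / (m : ℝ) := by
      rw [h2]
      have hsm : 0 < Real.sqrt (m : ℝ) := Real.sqrt_pos.mpr hmpos
      have hms := Real.mul_self_sqrt hmpos.le
      field_simp
      linear_combination (-1 : ℝ) * hms
    rw [h4]; exact h3
  -- step 1 : Q ≤ P
  have hdenpos : (0 : ℝ) < (e / Real.sqrt 2 * (Real.sqrt (2 * a) * (a / e) ^ r)) *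
      (e / Real.sqrt 2 * (Real.sqrt (2 * b) * (b / e) ^ (m - r))) := by positivity
  have step1 : (Real.sqrt π * (Real.sqrt (2 * m) * ((m : ℝ) / e) ^ m)) *
        (θ ^ r * (1 - θ) ^ (m - r)) /
        ((e / Real.sqrt 2 * (Real.sqrt (2 * a) * (a / e) ^ r)) *
         (e / Real.sqrt 2 * (Real.sqrt (2 * b) * (b / e) ^ (m - r)))) ≤
      (Nat.choose m r : ℝ) * θ ^ r * (1 - θ) ^ (m - r) := by
    have hPeq : (Nat.choose m r : ℝ) * θ ^ r * (1 - θ) ^ (m - r) =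
        ((m.factorial : ℝ) * (θ ^ r * (1 - θ) ^ (m - r))) /
        ((r.factorial : ℝ) * ((m - r).factorial : ℝ)) := by
      rw [hchoose]; ring
    rw [hPeq]
    apply div_le_div₀ (by positivity)
    · exact mul_le_mul_of_nonneg_right hmfact (by positivity)
    · positivity
    · exact mul_le_mul hrfact hbfact' (by positivity) (by positivity)
  -- step 2 : rewrite Q
  have step2 : (Real.sqrt π * (Real.sqrt (2 * m) * ((m : ℝ) / e) ^ m)) *
        (θ ^ r * (1 - θ) ^ (m - r)) /
        ((e / Real.sqrt 2 * (Real.sqrt (2 * a) * (a / e) ^ r)) *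
         (e / Real.sqrt 2 * (Real.sqrt (2 * b) * (b / e) ^ (m - r)))) =
      (Real.sqrt π * 2 / e ^ 2) *
        (Real.sqrt (2 * m) / (Real.sqrt (2 * a) * Real.sqrt (2 * b))) *
        (((m : ℝ) * θ / a) ^ r * ((m : ℝ) * (1 - θ) / b) ^ (m - r)) := by
    have hs2 : (0:ℝ) < Real.sqrt 2 := by positivity
    have hsa : (0:ℝ) < Real.sqrt (2 * a) := by positivity
    have hsb : (0:ℝ) < Real.sqrt (2 * b) := by positivity
    have h22 : Real.sqrt 2 * Real.sqrt 2 = 2 := Real.mul_self_sqrt (by norm_num)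
    calc (Real.sqrt π * (Real.sqrt (2 * m) * ((m : ℝ) / e) ^ m)) *
        (θ ^ r * (1 - θ) ^ (m - r)) /
        ((e / Real.sqrt 2 * (Real.sqrt (2 * a) * (a / e) ^ r)) *
         (e / Real.sqrt 2 * (Real.sqrt (2 * b) * (b / e) ^ (m - r)))) =
      (Real.sqrt π * (Real.sqrt 2 * Real.sqrt 2) / e ^ 2) *
        (Real.sqrt (2 * m) / (Real.sqrt (2 * a) * Real.sqrt (2 * b))) *
        (((m : ℝ) * θ / a) ^ r * ((m : ℝ) * (1 - θ) / b) ^ (m - r)) := by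
          rw [hpowsplit]
          simp only [div_pow, mul_pow]
          field_simp
      _ = (Real.sqrt π * 2 / e ^ 2) *
        (Real.sqrt (2 * m) / (Real.sqrt (2 * a) * Real.sqrt (2 * b))) *
        (((m : ℝ) * θ / a) ^ r * ((m : ℝ) * (1 - θ) / b) ^ (m - r)) := by
          rw [h22]
  -- step 3 : numeric lower bound
  have hsqrtpi : (1.77 : ℝ) ≤ Real.sqrt π := by
    rw [show (1.77 : ℝ) = Real.sqrt (1.77 ^ 2) by
      rw [Real.sqrt_sq (by norm_num)]]
    apply Real.sqrt_le_sqrt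
    have := Real.pi_gt_d6
    norm_num
    linarith
  have hsqrt2 : (1.41 : ℝ) ≤ Real.sqrt 2 := by
    rw [show (1.41 : ℝ) = Real.sqrt (1.41 ^ 2) by
      rw [Real.sqrt_sq (by norm_num)]]
    apply Real.sqrt_le_sqrt
    norm_num
  have hesq : e ^ 2 < 7.3890561 := by
    have h := Real.exp_one_lt_d9
    have h2 : e ^ 2 < 2.7182818286 ^ 2 := by
      apply pow_lt_pow_left₀ (by rw [he]; exact h) (by rw [he]; positivity) (by norm_num)
    calc e ^ 2 < 2.7182818286 ^ 2 := h2
      _ < 7.3890561 := by norm_num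
  have hesqpos : (0 : ℝ) < e ^ 2 := by positivity
  have hnum : (1 / 2 : ℝ) ≤ Real.sqrt π * 2 / e ^ 2 * Real.sqrt 2 * (5 / 6) := by
    have heq : Real.sqrt π * 2 / e ^ 2 * Real.sqrt 2 * (5 / 6) =
        (Real.sqrt π * Real.sqrt 2 * (5 / 3)) / e ^ 2 := by ring
    rw [heq, le_div_iff₀ hesqpos]
    have hps2 : (2.4957 : ℝ) ≤ Real.sqrt π * Real.sqrt 2 := by
      calc (2.4957 : ℝ) = 1.77 * 1.41 := by norm_num
        _ ≤ Real.sqrt π * Real.sqrt 2 :=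
          mul_le_mul hsqrtpi hsqrt2 (by norm_num) (Real.sqrt_nonneg π)
    linarith
  have hsmpos : (0 : ℝ) < Real.sqrt m := Real.sqrt_pos.mpr hmpos
  have hsN : Real.sqrt (m : ℝ) ≤ Real.sqrt (N : ℝ) := by
    apply Real.sqrt_le_sqrt
    exact_mod_cast Nat.cast_le.mpr (by omega : m ≤ N)
  have step3 : 1 / (2 * Real.sqrt N) ≤
      (Real.sqrt π * 2 / e ^ 2) *
        (Real.sqrt (2 * m) / (Real.sqrt (2 * a) * Real.sqrt (2 * b))) *
        (((m : ℝ) * θ / a) ^ r * ((m : ℝ) * (1 - θ) / b) ^ (m - r)) := by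
    have h1 : 1 / (2 * Real.sqrt N) ≤ 1 / (2 * Real.sqrt m) := by
      apply one_div_le_one_div_of_le (by positivity)
      linarith
    have h2 : (Real.sqrt π * 2 / e ^ 2) * (Real.sqrt 2 / Real.sqrt m) * (5 / 6) ≤
        (Real.sqrt π * 2 / e ^ 2) *
          (Real.sqrt (2 * m) / (Real.sqrt (2 * a) * Real.sqrt (2 * b))) *
          (((m : ℝ) * θ / a) ^ r * ((m : ℝ) * (1 - θ) / b) ^ (m - r)) := by
      apply mul_le_mul
      · exact mul_le_mul_of_nonneg_left hS (by positivity)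
      · exact hA56
      · norm_num
      · positivity
    have h3 : 1 / (2 * Real.sqrt m) ≤
        (Real.sqrt π * 2 / e ^ 2) * (Real.sqrt 2 / Real.sqrt m) * (5 / 6) := by
      have heq1 : (Real.sqrt π * 2 / e ^ 2) * (Real.sqrt 2 / Real.sqrt m) * (5 / 6) =
          (Real.sqrt π * 2 / e ^ 2 * Real.sqrt 2 * (5 / 6)) * (1 / Real.sqrt m) := by
        ring
      have heq2 : 1 / (2 * Real.sqrt (m : ℝ)) = (1 / 2) * (1 / Real.sqrt (m : ℝ)) := by
        rw [one_div, mul_inv, ← one_div, ← one_div]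
      rw [heq1, heq2]
      exact mul_le_mul_of_nonneg_right hnum (by positivity)
    linarith
  calc 1 / (2 * Real.sqrt N) ≤ _ := step3
    _ = _ := step2.symm
    _ ≤ (Nat.choose m r : ℝ) * θ ^ r * (1 - θ) ^ (m - r) := step1
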